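/- Let $R$ be a commutative ring and let $T$ be an $n \times n$ tridiagonal matrix ($n \geq 2$) with superdiagonal entries all equal to $1$ and subdiagonal entries $b_1, \dots, b_{n-1}$. Denote by $T^{(i)}$ the matrix obtained by deleting row $i$ and column $i$, and by $T^{(1,n)}$ the matrix obtained by deleting rows and columns $1$ and $n$. Then $\det(T^{(1)}) \cdot \det(T^{(n)}) - \det(T) \cdot \det(T^{(1,n)}) = b_1 b_2 \cdots b_{n-1}$. -/

import Mathlib

/-- The `m × m` tridiagonal matrix with diagonal entries `d 0, …, d (m-1)`,
superdiagonal entries all `1`, and subdiagonal entries `c 0, …, c (m-2)`. -/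
def tridiag {R : Type*} [CommRing R] (m : ℕ) (d : ℕ → R) (c : ℕ → R) :
    Matrix (Fin m) (Fin m) R :=
  Matrix.of fun i j =>
    if (i : ℕ) = j then d i
    else if (i : ℕ) + 1 = j then 1
    else if (j : ℕ) + 1 = i then c j
    else 0

lemma tridiag_submatrix₀ {R : Type*} [CommRing R] {p q : ℕ} (d c : ℕ → R)
    (e f : Fin p → Fin q) (he : ∀ k, (e k : ℕ) = k) (hf : ∀ k, (f k : ℕ) = k) :
    (tridiag q d c).submatrix e f = tridiag p d c := by
  ext i j
  simp only [tridiag, Matrix.submatrix_apply, Matrix.of_apply, he, hf]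

lemma tridiag_submatrix₁ {R : Type*} [CommRing R] {p q : ℕ} (d c : ℕ → R)
    (e f : Fin p → Fin q) (he : ∀ k, (e k : ℕ) = k + 1) (hf : ∀ k, (f k : ℕ) = k + 1) :
    (tridiag q d c).submatrix e f =
      tridiag p (fun i => d (i + 1)) (fun i => c (i + 1)) := by
  ext i j
  simp only [tridiag, Matrix.submatrix_apply, Matrix.of_apply, he, hf]
  split_ifs <;> first | rfl | omega

lemma det_tridiag_rec {R : Type*} [CommRing R] (m : ℕ) (d c : ℕ → R) :
    (tridiag (m + 2) d c).det =
      d (m + 1) * (tridiag (m + 1) d c).det - c m * (tridiag m d c).det := by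
  rw [Matrix.det_succ_row (tridiag (m + 2) d c) (Fin.last (m + 1))]
  rw [Fin.sum_univ_castSucc, Fin.sum_univ_castSucc]
  have hz : ∀ j : Fin m,
      ((-1 : R) ^ ((Fin.last (m+1) : ℕ) + ((j.castSucc.castSucc : Fin (m+2)) : ℕ)) *
        tridiag (m+2) d c (Fin.last (m+1)) j.castSucc.castSucc *
        ((tridiag (m+2) d c).submatrix (Fin.last (m+1)).succAbove
          (j.castSucc.castSucc).succAbove).det) = 0 := by
    intro j
    have hj : (j : ℕ) < m := j.isLt
    have : tridiag (m+2) d c (Fin.last (m+1)) j.castSucc.castSucc = 0 := by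
      simp only [tridiag, Matrix.of_apply, Fin.val_last, Fin.coe_castSucc]
      split_ifs <;> first | rfl | omega
    rw [this]; ring
  rw [Finset.sum_eq_zero fun j _ => hz j, zero_add]
  -- entries
  have e1 : tridiag (m+2) d c (Fin.last (m+1)) (Fin.last (m+1)) = d (m+1) := by
    simp [tridiag]
  have e2 : tridiag (m+2) d c (Fin.last (m+1)) (Fin.last m).castSucc = c m := by
    simp only [tridiag, Matrix.of_apply, Fin.val_last, Fin.coe_castSucc]
    split_ifs <;> first | rfl | omega
  -- minors
  have m1 : (tridiag (m+2) d c).submatrix (Fin.last (m+1)).succAbove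
      (Fin.last (m+1)).succAbove = tridiag (m+1) d c := by
    apply tridiag_submatrix₀ <;>
    · intro k
      simp [Fin.succAbove_last]
  have m2 : ((tridiag (m+2) d c).submatrix (Fin.last (m+1)).succAbove
      ((Fin.last m).castSucc : Fin (m+2)).succAbove).det = (tridiag m d c).det := by
    set M := (tridiag (m+2) d c).submatrix (Fin.last (m+1)).succAbove
      ((Fin.last m).castSucc : Fin (m+2)).succAbove with hM
    rw [Matrix.det_succ_column M (Fin.last m), Fin.sum_univ_castSucc]
    have col : ∀ i : Fin (m+1), M i (Fin.last m) =
        tridiag (m+2) d c ((Fin.last (m+1)).succAbove i) (Fin.last (m+1)) := by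
      intro i
      have : ((Fin.last m).castSucc : Fin (m+2)).succAbove (Fin.last m) = Fin.last (m+1) := by
        ext
        simp [Fin.succAbove, Fin.lt_def]
      rw [hM, Matrix.submatrix_apply, this]
    have hzero : ∀ i : Fin m,
        ((-1 : R) ^ (((i.castSucc : Fin (m+1)) : ℕ) + ((Fin.last m : Fin (m+1)) : ℕ)) *
          M i.castSucc (Fin.last m) *
          (M.submatrix (i.castSucc).succAbove (Fin.last m).succAbove).det) = 0 := by
      intro i
      have hi : (i : ℕ) < m := i.isLt
      have : M i.castSucc (Fin.last m) = 0 := by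
        rw [col]
        have : ((Fin.last (m+1)).succAbove i.castSucc : ℕ) = i := by
          simp [Fin.succAbove_last]
        simp only [tridiag, Matrix.of_apply, this, Fin.val_last]
        split_ifs <;> first | rfl | omega
      rw [this]; ring
    rw [Finset.sum_eq_zero fun i _ => hzero i, zero_add]
    have hone : M (Fin.last m) (Fin.last m) = 1 := by
      rw [col]
      have : ((Fin.last (m+1)).succAbove (Fin.last m) : ℕ) = m := by
        simp [Fin.succAbove_last]
      simp only [tridiag, Matrix.of_apply, this, Fin.val_last]
      split_ifs <;> first | rfl | omega
    have hmin : M.submatrix (Fin.last m).succAbove (Fin.last m).succAbove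
        = tridiag m d c := by
      rw [hM, Matrix.submatrix_submatrix]
      apply tridiag_submatrix₀ <;>
      · intro k
        have hk : (k : ℕ) < m := k.isLt
        simp only [Function.comp_apply, Fin.succAbove, Fin.lt_def, Fin.coe_castSucc,
          Fin.val_last, Fin.val_succ]
        split_ifs <;> simp_all <;> omega
    rw [hone, hmin, Fin.val_last]
    have : Even (m + m) := ⟨m, by ring⟩
    rw [this.neg_one_pow]
    ring
  rw [e1, e2, m1, m2, Fin.val_last, Fin.coe_castSucc, Fin.val_last]
  have h1 : Even ((m + 1) + (m + 1)) := ⟨m+1, by ring⟩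
  have h2 : Odd ((m + 1) + m) := ⟨m, by ring⟩
  rw [h1.neg_one_pow, h2.neg_one_pow]
  ring

lemma key_identity {R : Type*} [CommRing R] (a b : ℕ → R) (m : ℕ) :
    (tridiag (m+1) (fun i => a (i+1)) (fun i => b (i+1))).det * (tridiag (m+1) a b).det -
      (tridiag (m+2) a b).det * (tridiag m (fun i => a (i+1)) (fun i => b (i+1))).det =
      ∏ i ∈ Finset.range (m+1), b i := by
  induction m with
  | zero =>
      rw [det_tridiag_rec 0 a b]
      simp [tridiag, Matrix.det_fin_one, Matrix.det_fin_zero]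
  | succ m ih =>
      rw [det_tridiag_rec (m+1) a b, det_tridiag_rec m (fun i => a (i+1)) (fun i => b (i+1)),
        Finset.prod_range_succ]
      linear_combination b (m+1) * ih

/-- Desnanot–Jacobi-type identity for tridiagonal matrices with superdiagonal `1`:
`det T⁽¹⁾ · det T⁽ⁿ⁾ − det T · det T⁽¹'ⁿ⁾ = b₁ ⋯ b_{n-1}`, where `T⁽¹⁾` deletes the
first row and column, `T⁽ⁿ⁾` the last, and `T⁽¹'ⁿ⁾` both. -/
theorem stmt_3 {R : Type*} [CommRing R] (n : ℕ) (hn : 2 ≤ n) (a b : ℕ → R) :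
    ((tridiag n a b).submatrix
        (fun k : Fin (n - 1) => (⟨(k : ℕ) + 1, by have := k.isLt; omega⟩ : Fin n))
        (fun k : Fin (n - 1) => (⟨(k : ℕ) + 1, by have := k.isLt; omega⟩ : Fin n))).det *
    ((tridiag n a b).submatrix
        (fun k : Fin (n - 1) => (⟨(k : ℕ), by have := k.isLt; omega⟩ : Fin n))
        (fun k : Fin (n - 1) => (⟨(k : ℕ), by have := k.isLt; omega⟩ : Fin n))).det -
    (tridiag n a b).det *
    ((tridiag n a b).submatrix
        (fun k : Fin (n - 2) => (⟨(k : ℕ) + 1, by have := k.isLt; omega⟩ : Fin n))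
        (fun k : Fin (n - 2) => (⟨(k : ℕ) + 1, by have := k.isLt; omega⟩ : Fin n))).det =
    ∏ i ∈ Finset.range (n - 1), b i := by
  obtain ⟨m, rfl⟩ : ∃ m, n = m + 2 := ⟨n - 2, by omega⟩
  have e1 := tridiag_submatrix₁ a b
      (fun k : Fin (m + 2 - 1) => (⟨(k : ℕ) + 1, by have := k.isLt; omega⟩ : Fin (m + 2)))
      (fun k : Fin (m + 2 - 1) => (⟨(k : ℕ) + 1, by have := k.isLt; omega⟩ : Fin (m + 2)))
      (fun k => rfl) (fun k => rfl)
  have e2 := tridiag_submatrix₀ a b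
      (fun k : Fin (m + 2 - 1) => (⟨(k : ℕ), by have := k.isLt; omega⟩ : Fin (m + 2)))
      (fun k : Fin (m + 2 - 1) => (⟨(k : ℕ), by have := k.isLt; omega⟩ : Fin (m + 2)))
      (fun k => rfl) (fun k => rfl)
  have e3 := tridiag_submatrix₁ a b
      (fun k : Fin (m + 2 - 2) => (⟨(k : ℕ) + 1, by have := k.isLt; omega⟩ : Fin (m + 2)))
      (fun k : Fin (m + 2 - 2) => (⟨(k : ℕ) + 1, by have := k.isLt; omega⟩ : Fin (m + 2)))
      (fun k => rfl) (fun k => rfl)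
  rw [e1, e2, e3]
  exact key_identity a b m
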